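/- For a text T[0, n−1] with suffix array SA and Burrows-Wheeler transform BWT defined by BWT[i] = T[(SA[i] − 1) mod n], the LF-mapping LF(i) = C[BWT[i]] + rank_BWT(i, BWT[i]) satisfies SA[LF(i)] = (SA[i] − 1) mod n for all i, where C[c] is the number of positions j with BWT[j] < c. -/

import Mathlib

/-- **LF-mapping correctness**: for a text `T[0, n−1]` (whose last character is
a unique smallest terminator) with suffix array `SA` (listing the suffixes in
lexicographic order) and Burrows-Wheeler transform
`BWT[i] = T[(SA[i] − 1) mod n]`, the LF-mapping
`LF(i) = C[BWT[i]] + rank_BWT(i, BWT[i])` satisfies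
`SA[LF(i)] = (SA[i] − 1) mod n` for all `i`, where `C[c] = |{j : BWT[j] < c}|`
and `rank_BWT(i, c)` counts occurrences of `c` in `BWT[0, i−1]`. -/
theorem lf_mapping_correct
    {α : Type*} [LinearOrder α] {n : ℕ} (hn : 0 < n)
    (T : Fin n → α) (SA : Equiv.Perm (Fin n))
    (hterm : ∀ j : Fin n, (j : ℕ) ≠ n - 1 →
      T ⟨n - 1, Nat.sub_lt hn one_pos⟩ < T j)
    (hsorted : ∀ i j : Fin n, i < j →
      List.Lex (· < ·) ((List.ofFn T).drop (SA i)) ((List.ofFn T).drop (SA j)))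
    (BWT : Fin n → α)
    (hBWT : ∀ i : Fin n, BWT i = T ⟨((SA i : ℕ) + (n - 1)) % n, Nat.mod_lt _ hn⟩)
    (C : α → ℕ)
    (hC : ∀ c : α, C c = (Finset.univ.filter (fun j : Fin n => BWT j < c)).card)
    (rank : ℕ → α → ℕ)
    (hrank : ∀ (i : ℕ) (c : α), rank i c =
      (Finset.univ.filter (fun j : Fin n => (j : ℕ) < i ∧ BWT j = c)).card)
    (LF : Fin n → ℕ)
    (hLF : ∀ i : Fin n, LF i = C (BWT i) + rank i (BWT i)) :
    ∀ i : Fin n, ∃ h : LF i < n,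
      (SA ⟨LF i, h⟩ : ℕ) = ((SA i : ℕ) + (n - 1)) % n := by
  classical
  set L := List.ofFn T with hL
  have hlen : L.length = n := List.length_ofFn
  -- cons decomposition of suffixes
  have hcons : ∀ q : Fin n, L.drop (q : ℕ) = T q :: L.drop ((q : ℕ) + 1) := by
    intro q
    rw [List.drop_eq_getElem_cons (by rw [hlen]; exact q.isLt)]
    congr 1
    simp [hL]
  -- lex cons characterization
  have hlex : ∀ (a b : α) (l m : List α),
      List.Lex (· < ·) (a :: l) (b :: m) ↔ a < b ∨ (a = b ∧ List.Lex (· < ·) l m) := by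
    intro a b l m
    constructor
    · intro h
      cases h with
      | cons h => exact Or.inr ⟨rfl, h⟩
      | rel h => exact Or.inl h
    · rintro (h | ⟨rfl, h⟩)
      · exact .rel h
      · exact .cons h
  -- suffix order reflects index order
  have hiff : ∀ j k : Fin n,
      List.Lex (· < ·) (L.drop ((SA j : ℕ))) (L.drop ((SA k : ℕ))) ↔ j < k := by
    intro j k
    constructor
    · intro h
      rcases lt_trichotomy j k with h' | rfl | h'
      · exact h'
      · exact absurd h (fun h => asymm_of (List.Lex (· < ·)) h h)
      · exact absurd h (asymm_of (List.Lex (· < ·)) (hsorted k j h'))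
    · exact hsorted j k
  -- position of a suffix = number of lexicographically smaller suffixes
  have hpos : ∀ k : Fin n,
      (Finset.univ.filter (fun j : Fin n =>
        List.Lex (· < ·) (L.drop ((SA j : ℕ))) (L.drop ((SA k : ℕ))))).card = (k : ℕ) := by
    intro k
    have h1 : (Finset.univ.filter (fun j : Fin n =>
        List.Lex (· < ·) (L.drop ((SA j : ℕ))) (L.drop ((SA k : ℕ))))) = Finset.Iio k := by
      ext j
      simp [hiff]
    rw [h1]
    simp
  -- the cyclic predecessor permutation
  have e1 : ∀ q : ℕ, q < n → ((q + (n - 1)) % n + 1) % n = q := by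
    intro q hq
    rw [Nat.mod_add_mod]
    have h : q + (n - 1) + 1 = q + n := by omega
    rw [h, Nat.add_mod_right, Nat.mod_eq_of_lt hq]
  have e2 : ∀ q : ℕ, q < n → ((q + 1) % n + (n - 1)) % n = q := by
    intro q hq
    rw [Nat.mod_add_mod]
    have h : q + 1 + (n - 1) = q + n := by omega
    rw [h, Nat.add_mod_right, Nat.mod_eq_of_lt hq]
  set e : Equiv.Perm (Fin n) :=
    ⟨fun q => ⟨((q : ℕ) + (n - 1)) % n, Nat.mod_lt _ hn⟩,
     fun q => ⟨((q : ℕ) + 1) % n, Nat.mod_lt _ hn⟩,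
     fun q => Fin.ext (e1 q q.isLt),
     fun q => Fin.ext (e2 q q.isLt)⟩ with he
  set φ : Equiv.Perm (Fin n) := (SA.trans e).trans SA.symm with hφdef
  have hφ : ∀ j : Fin n, (SA (φ j) : ℕ) = ((SA j : ℕ) + (n - 1)) % n := by
    intro j
    simp [hφdef, he, Equiv.trans_apply]
  have hBWT' : ∀ j : Fin n, BWT j = T (SA (φ j)) := by
    intro j
    rw [hBWT]
    exact congrArg T (Fin.ext (hφ j).symm)
  -- predecessor value when not at position 0
  have hpred : ∀ q : Fin n, (q : ℕ) ≠ 0 → ((q : ℕ) + (n - 1)) % n = (q : ℕ) - 1 := by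
    intro q hq
    have h : (q : ℕ) + (n - 1) = ((q : ℕ) - 1) + n := by
      have := q.isLt; omega
    rw [h, Nat.add_mod_right, Nat.mod_eq_of_lt (by have := q.isLt; omega)]
  -- T at n-1 is minimal
  have hmin : ∀ x : Fin n, T ⟨n - 1, Nat.sub_lt hn one_pos⟩ ≤ T x := by
    intro x
    by_cases hx : (x : ℕ) = n - 1
    · have : x = ⟨n - 1, Nat.sub_lt hn one_pos⟩ := Fin.ext hx
      rw [this]
    · exact le_of_lt (hterm x hx)
  have hTeq : ∀ x : Fin n, T x = T ⟨n - 1, Nat.sub_lt hn one_pos⟩ → x = ⟨n - 1, Nat.sub_lt hn one_pos⟩ := by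
    intro x hx
    by_contra hne
    have hxv : (x : ℕ) ≠ n - 1 := fun h => hne (Fin.ext h)
    exact absurd hx (ne_of_gt (hterm x hxv))
  intro i
  set c : α := BWT i with hc
  set p : Fin n := ⟨((SA i : ℕ) + (n - 1)) % n, Nat.mod_lt _ hn⟩ with hp
  have hTp : T p = c := (hBWT i).symm
  -- main claim
  have key : ((SA.symm p : Fin n) : ℕ) = LF i := by
    have h0 : ((SA.symm p : Fin n) : ℕ) = (Finset.univ.filter (fun j : Fin n =>
        List.Lex (· < ·) (L.drop ((SA j : ℕ))) (L.drop ((p : ℕ))))).card := by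
      have := hpos (SA.symm p)
      rw [Equiv.apply_symm_apply] at this
      exact this.symm
    rw [h0, hLF, ← hc, hC, hrank]
    by_cases hz : (SA i : ℕ) = 0
    · -- special case: suffix is the terminator alone
      have hpv : (p : ℕ) = n - 1 := by
        show ((SA i : ℕ) + (n - 1)) % n = n - 1
        rw [hz, Nat.zero_add, Nat.mod_eq_of_lt (Nat.sub_lt hn one_pos)]
      have hpeq : p = ⟨n - 1, Nat.sub_lt hn one_pos⟩ := Fin.ext hpv
      have hceq : c = T ⟨n - 1, Nat.sub_lt hn one_pos⟩ := by rw [← hTp, hpeq]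
      have hdp : L.drop ((p : ℕ)) = [T ⟨n - 1, Nat.sub_lt hn one_pos⟩] := by
        rw [hpeq]
        rw [hcons ⟨n - 1, Nat.sub_lt hn one_pos⟩]
        have : (n - 1) + 1 = n := by omega
        rw [this]
        rw [show L.drop n = [] from by rw [← hlen]; exact List.drop_length]
      have hS : (Finset.univ.filter (fun j : Fin n =>
          List.Lex (· < ·) (L.drop ((SA j : ℕ))) (L.drop ((p : ℕ))))) = ∅ := by
        ext j
        simp only [Finset.mem_filter, Finset.mem_univ, true_and, Finset.notMem_empty,
          iff_false]
        rw [hdp, hcons (SA j), hlex]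
        rintro (h | ⟨h, h'⟩)
        · exact absurd h (not_lt_of_ge (hmin (SA j)))
        · exact List.not_lex_nil h'
      have hCc : (Finset.univ.filter (fun j : Fin n => BWT j < c)) = ∅ := by
        ext j
        simp only [Finset.mem_filter, Finset.mem_univ, true_and, Finset.notMem_empty,
          iff_false]
        rw [hBWT' j, hceq]
        exact not_lt_of_ge (hmin _)
      have hR : (Finset.univ.filter (fun j : Fin n => (j : ℕ) < (i : ℕ) ∧ BWT j = c)) = ∅ := by
        ext j
        simp only [Finset.mem_filter, Finset.mem_univ, true_and, Finset.notMem_empty,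
          iff_false]
        rintro ⟨hji, hBj⟩
        rw [hBWT' j, hceq] at hBj
        have h1 : SA (φ j) = ⟨n - 1, Nat.sub_lt hn one_pos⟩ := hTeq _ hBj
        have h2 : ((SA j : ℕ) + (n - 1)) % n = n - 1 := by
          rw [← hφ j, h1]
        have h3 : (SA j : ℕ) = 0 := by
          have h4 := e1 (SA j : ℕ) (SA j).isLt
          rw [h2] at h4
          have h5 : (n - 1) + 1 = n := by omega
          rw [h5, Nat.mod_self] at h4
          omega
        have h6 : SA j = SA i := Fin.ext (by rw [h3, hz])
        have : j = i := SA.injective h6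
        omega
      rw [hS, hCc, hR]
      simp
    · -- general case : SA i ≥ 1
      have hpv : (p : ℕ) = (SA i : ℕ) - 1 := hpred (SA i) hz
      have hp1 : (p : ℕ) + 1 = (SA i : ℕ) := by
        have := (SA i).isLt; omega
      have hpne : (p : ℕ) ≠ n - 1 := by
        have := (SA i).isLt; omega
      have hcgt : T ⟨n - 1, Nat.sub_lt hn one_pos⟩ < c := by
        rw [← hTp]; exact hterm p hpne
      have hdp : L.drop ((p : ℕ)) = c :: L.drop ((SA i : ℕ)) := by
        rw [hcons p, hTp, hp1]
      -- split the count
      have hS : (Finset.univ.filter (fun j : Fin n =>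
          List.Lex (· < ·) (L.drop ((SA j : ℕ))) (L.drop ((p : ℕ)))))
          = (Finset.univ.filter (fun j : Fin n => T (SA j) < c))
            ∪ (Finset.univ.filter (fun j : Fin n =>
                T (SA j) = c ∧ List.Lex (· < ·) (L.drop ((SA j : ℕ) + 1)) (L.drop ((SA i : ℕ))))) := by
        rw [← Finset.filter_or]
        apply Finset.filter_congr
        intro j _
        rw [hdp, hcons (SA j), hlex]
      rw [hS, Finset.card_union_of_disjoint]
      · congr 1
        · -- first count equals C c
          refine (Finset.card_equiv φ (fun j => ?_)).symm
          simp only [Finset.mem_filter, Finset.mem_univ, true_and]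
          rw [hBWT' j]
        · -- second count equals rank i c
          refine (Finset.card_equiv φ (fun j => ?_)).symm
          simp only [Finset.mem_filter, Finset.mem_univ, true_and]
          by_cases hjz : (SA j : ℕ) = 0
          · -- both sides false
            have h1 : (SA (φ j) : ℕ) = n - 1 := by
              rw [hφ j, hjz, Nat.zero_add]
              exact Nat.mod_eq_of_lt (Nat.sub_lt hn one_pos)
            have h2 : T (SA (φ j)) ≠ c := by
              have : SA (φ j) = ⟨n - 1, Nat.sub_lt hn one_pos⟩ := Fin.ext h1
              rw [this]
              exact ne_of_lt hcgt
            constructor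
            · rintro ⟨_, hBj⟩
              exact absurd (by rw [← hBWT' j]; exact hBj) h2
            · rintro ⟨hTj, _⟩
              exact absurd hTj h2
          · have h1 : (SA (φ j) : ℕ) + 1 = (SA j : ℕ) := by
              rw [hφ j]
              show ((SA j : ℕ) + (n - 1)) % n + 1 = _
              rw [hpred (SA j) hjz]
              omega
            rw [h1, ← hBWT' j, hiff j i, Fin.lt_def]
            exact and_comm
      · -- disjointness
        rw [Finset.disjoint_filter]
        rintro j _ hlt ⟨heq, _⟩
        rw [heq] at hlt
        exact lt_irrefl _ hlt
  have h1 : LF i < n := key ▸ (SA.symm p).isLt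
  refine ⟨h1, ?_⟩
  have h2 : (⟨LF i, h1⟩ : Fin n) = SA.symm p := Fin.ext key.symm
  rw [h2, Equiv.apply_symm_apply]
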